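/- For every digraph G=(V,A) with root r, nonnegative arc costs c, and nonnegative node penalties π, there exists an out-arborescence T rooted at r such that c(T) + π(V∖V(T)) is at most the minimum, over all collections C of r-rooted walks, of the total cost of the walks in C plus the total penalty of nodes not visited by any walk in C. -/

import Mathlib

open Finset

/-- Cost of a walk given by its vertex sequence. -/
def walkCost {V : Type*} (c : V → V → ℝ) (P : List V) : ℝ :=
  ((P.zip P.tail).map fun q => c q.1 q.2).sum

/-- A walk rooted at `r` in the digraph with arc set `A`. -/
def IsWalk {V : Type*} (A : Finset (V × V)) (r : V) (P : List V) : Prop :=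
  P.head? = some r ∧ P.Chain' (fun u v => (u, v) ∈ A)

section Aux

variable {V : Type*} [Fintype V] [DecidableEq V]

/-- An out-arborescence rooted at `r` given by vertex set `S` and parent map. -/
def GoodArb (A : Finset (V × V)) (r : V) (S : Finset V) (par : V → V) : Prop :=
  r ∈ S ∧ (∀ v ∈ S, v ≠ r → (par v, v) ∈ A ∧ par v ∈ S) ∧
    (∀ v ∈ S, ∃ n : ℕ, par^[n] v = r)

lemma walkCost_cons_cons (c : V → V → ℝ) (u v : V) (Q : List V) :
    walkCost c (u :: v :: Q) = c u v + walkCost c (v :: Q) := by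
  simp [walkCost]

lemma reach_update {r : V} {par : V → V} {S : Finset V}
    (hS : ∀ v ∈ S, v ≠ r → par v ∈ S) {v u : V} (hv : v ∉ S) :
    ∀ n : ℕ, ∀ w ∈ S, par^[n] w = r → ∃ m, (Function.update par v u)^[m] w = r := by
  intro n
  induction n with
  | zero => exact fun w _ h => ⟨0, h⟩
  | succ n ih =>
    intro w hw h
    by_cases hwr : w = r
    · exact ⟨0, hwr⟩
    · have hpw : par w ∈ S := hS w hw hwr
      rw [Function.iterate_succ_apply] at h
      obtain ⟨m, hm⟩ := ih (par w) hpw h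
      refine ⟨m + 1, ?_⟩
      have hwv : w ≠ v := by rintro rfl; exact hv hw
      rw [Function.iterate_succ_apply, Function.update_of_ne hwv u par]
      exact hm

lemma ext_chain (A : Finset (V × V)) (r : V) (c : V → V → ℝ)
    (hc : ∀ u v, 0 ≤ c u v) :
    ∀ (Q : List V) (S : Finset V) (par : V → V), GoodArb A r S par →
      ∀ u ∈ S, List.Chain (fun a b => (a, b) ∈ A) u Q →
      ∃ S' par', GoodArb A r S' par' ∧ S ⊆ S' ∧ (∀ x ∈ Q, x ∈ S') ∧
        (∑ w ∈ S'.erase r, c (par' w) w) ≤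
          (∑ w ∈ S.erase r, c (par w) w) + walkCost c (u :: Q) := by
  intro Q
  induction Q with
  | nil =>
    intro S par hG u hu _
    refine ⟨S, par, hG, subset_rfl, by simp, ?_⟩
    simp [walkCost]
  | cons v Q ih =>
    intro S par hG u hu hch
    simp only [List.Chain, List.isChain_cons_cons] at hch
    obtain ⟨huv, hchv⟩ := hch
    rw [walkCost_cons_cons]
    by_cases hv : v ∈ S
    · obtain ⟨S', par', hG', hsub, hcov, hcost⟩ := ih S par hG v hv hchv
      refine ⟨S', par', hG', hsub, ?_, ?_⟩
      · intro x hx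
        rcases List.mem_cons.mp hx with rfl | hx
        · exact hsub hv
        · exact hcov x hx
      · nlinarith [hc u v]
    · -- insert v with parent u
      have hvr : v ≠ r := fun h => hv (h ▸ hG.1)
      set par1 := Function.update par v u with hpar1
      have hG1 : GoodArb A r (insert v S) par1 := by
        refine ⟨mem_insert_of_mem hG.1, ?_, ?_⟩
        · intro w hw hwr
          rcases mem_insert.mp hw with rfl | hw
          · have : par1 w = u := Function.update_self w u par
            rw [this]
            exact ⟨huv, mem_insert_of_mem hu⟩
          · have hne : w ≠ v := fun h => hv (h ▸ hw)
            have : par1 w = par w := Function.update_of_ne hne u par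
            rw [this]
            exact ⟨(hG.2.1 w hw hwr).1, mem_insert_of_mem (hG.2.1 w hw hwr).2⟩
        · intro w hw
          have hSto : ∀ x ∈ S, x ≠ r → par x ∈ S := fun x hx hxr => (hG.2.1 x hx hxr).2
          rcases mem_insert.mp hw with rfl | hw
          · obtain ⟨n, hn⟩ := hG.2.2 u hu
            obtain ⟨m, hm⟩ := reach_update hSto hv n u hu hn
            refine ⟨m + 1, ?_⟩
            rw [Function.iterate_succ_apply, hpar1, Function.update_self]
            exact hm
          · obtain ⟨n, hn⟩ := hG.2.2 w hw
            exact reach_update hSto hv n w hw hn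
      have hcost1 : (∑ w ∈ (insert v S).erase r, c (par1 w) w)
          = (∑ w ∈ S.erase r, c (par w) w) + c u v := by
        rw [Finset.erase_insert_of_ne hvr]
        have hvnot : v ∉ S.erase r := fun h => hv (mem_of_mem_erase h)
        rw [Finset.sum_insert hvnot]
        have : ∀ w ∈ S.erase r, c (par1 w) w = c (par w) w := by
          intro w hw
          have hne : w ≠ v := fun h => hv (h ▸ mem_of_mem_erase hw)
          rw [hpar1, Function.update_of_ne hne u par]
        have hpv : par1 v = u := by rw [hpar1]; exact Function.update_self v u par
        rw [Finset.sum_congr rfl this, hpv]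
        ring
      obtain ⟨S', par', hG', hsub, hcov, hcost⟩ :=
        ih (insert v S) par1 hG1 v (mem_insert_self v S) hchv
      refine ⟨S', par', hG', fun x hx => hsub (mem_insert_of_mem hx), ?_, ?_⟩
      · intro x hx
        rcases List.mem_cons.mp hx with rfl | hx
        · exact hsub (mem_insert_self _ S)
        · exact hcov x hx
      · rw [hcost1] at hcost
        linarith

lemma ext_coll (A : Finset (V × V)) (r : V) (c : V → V → ℝ)
    (hc : ∀ u v, 0 ≤ c u v) :
    ∀ (C : List (List V)), (∀ P ∈ C, IsWalk A r P) →
      ∃ (S : Finset V) (par : V → V), GoodArb A r S par ∧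
        (∀ P ∈ C, ∀ x ∈ P, x ∈ S) ∧
        (∑ w ∈ S.erase r, c (par w) w) ≤ (C.map (walkCost c)).sum := by
  intro C
  induction C with
  | nil =>
    intro _
    refine ⟨{r}, id, ⟨mem_singleton_self r, ?_, ?_⟩, by simp, ?_⟩
    · intro v hv hvr; exact absurd (mem_singleton.mp hv) hvr
    · intro v hv; exact ⟨0, (mem_singleton.mp hv)⟩
    · simp
  | cons P C ih =>
    intro hC
    obtain ⟨S, par, hG, hcov, hcost⟩ := ih (fun P hP => hC P (List.mem_cons_of_mem _ hP))
    have hP : IsWalk A r P := hC P (List.mem_cons_self (a := P) (l := C))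
    obtain ⟨hhead, hchain⟩ := hP
    cases P with
    | nil => simp at hhead
    | cons a Q =>
      have hr' : a = r := by simpa using hhead
      subst hr'
      have hch : List.Chain (fun a b => (a, b) ∈ A) a Q := hchain
      obtain ⟨S', par', hG', hsub, hcov', hcost'⟩ :=
        ext_chain A a c hc Q S par hG a hG.1 hch
      refine ⟨S', par', hG', ?_, ?_⟩
      · intro P' hP' x hx
        rcases List.mem_cons.mp hP' with rfl | hP'
        · rcases List.mem_cons.mp hx with rfl | hx
          · exact hsub hG.1
          · exact hcov' x hx
        · exact hsub (hcov P' hP' x hx)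
      · rw [List.map_cons, List.sum_cons]
        linarith

end Aux

/-- (Main theorem.)  For every digraph with nonnegative arc costs and
node penalties there is an out-arborescence `T` rooted at `r` (given by its vertex set
`S` and parent function `par`) whose prize-collecting cost
`c(T) + π(V ∖ V(T))` is at most the prize-collecting cost of every collection of
`r`-rooted walks, i.e. at most the optimum value `O*`. -/
theorem pcw_arborescence_exists
    {V : Type*} [Fintype V] [DecidableEq V]
    (A : Finset (V × V)) (r : V) (c : V → V → ℝ) (π : V → ℝ)
    (hc : ∀ u v, 0 ≤ c u v) (hπ : ∀ v, 0 ≤ π v) :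
    ∃ (S : Finset V) (par : V → V),
      r ∈ S ∧
      (∀ v ∈ S, v ≠ r → (par v, v) ∈ A ∧ par v ∈ S) ∧
      (∀ v ∈ S, ∃ n : ℕ, par^[n] v = r) ∧
      ∀ C : List (List V), (∀ P ∈ C, IsWalk A r P) →
        (∑ v ∈ S.erase r, c (par v) v) + ∑ v ∈ Sᶜ, π v ≤
          (C.map (walkCost c)).sum +
            ∑ v ∈ Finset.univ.filter (fun v => ∀ P ∈ C, v ∉ P), π v := by
  have hne : Nonempty {p : Finset V × (V → V) // GoodArb A r p.1 p.2} := by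
    refine ⟨⟨({r}, id), mem_singleton_self r, ?_, ?_⟩⟩
    · intro v hv hvr; exact absurd (mem_singleton.mp hv) hvr
    · intro v hv; exact ⟨0, mem_singleton.mp hv⟩
  obtain ⟨⟨⟨S, par⟩, hG⟩, hmin⟩ :=
    Finite.exists_min (α := {p : Finset V × (V → V) // GoodArb A r p.1 p.2})
      (fun p => (∑ v ∈ p.1.1.erase r, c (p.1.2 v) v) + ∑ v ∈ p.1.1ᶜ, π v)
  refine ⟨S, par, hG.1, hG.2.1, hG.2.2, ?_⟩
  intro C hC
  obtain ⟨S1, par1, hG1, hcov1, hcost1⟩ := ext_coll A r c hc C hC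
  have hkey := hmin ⟨(S1, par1), hG1⟩
  have hpen : (∑ v ∈ S1ᶜ, π v) ≤
      ∑ v ∈ Finset.univ.filter (fun v => ∀ P ∈ C, v ∉ P), π v := by
    apply Finset.sum_le_sum_of_subset_of_nonneg
    · intro x hx
      rw [Finset.mem_compl] at hx
      rw [Finset.mem_filter]
      exact ⟨mem_univ x, fun P hP hxP => hx (hcov1 P hP x hxP)⟩
    · intro x _ _; exact hπ x
  calc (∑ v ∈ S.erase r, c (par v) v) + ∑ v ∈ Sᶜ, π v
      ≤ (∑ v ∈ S1.erase r, c (par1 v) v) + ∑ v ∈ S1ᶜ, π v := hkey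
    _ ≤ (C.map (walkCost c)).sum +
          ∑ v ∈ Finset.univ.filter (fun v => ∀ P ∈ C, v ∉ P), π v := by linarith
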